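/- (One-iteration estimate, Lemma 3.2.) Let (β_{k+1}, u_{k+1}, v_{k+1}, λ_{k+1}) be the output of the k-th iteration of the inexact primal–dual algorithm from (β_k, u_k, v_k, λ_k) with step size α_k > 0 and tolerance ε_k > 0. Then 𝓔_{k+1} ≤ 𝓔_k/(1+α_k) + ε_k β_k^{-1} α_k² ‖H‖ (σ‖x*‖ + ‖Hᵀλ* − c̃‖) + ε_k β_k^{-1} ( σ α_k² ‖H‖ ‖x_{k+1} − x*‖ + α_k β_k ‖H‖ ‖v_{k+1} − u*‖ + β_k² ‖λ_{k+1} − λ*‖ ). -/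

import Mathlib

open scoped RealInnerProductSpace
open Matrix Finset

/-- Index type for the primal variable `u = (x, y, z) ∈ ℝ^{mn} × ℝⁿ × ℝᵐ`. -/
abbrev PIdx (m n : ℕ) := Fin (m * n) ⊕ (Fin n ⊕ Fin m)

/-- The primal space `ℝ^{mn} × ℝⁿ × ℝᵐ` with the Euclidean norm. -/
abbrev PrimalSpace (m n : ℕ) := EuclideanSpace ℝ (PIdx m n)

/-- The dual (multiplier) space `ℝ^{m+n+r}` with the Euclidean norm. -/
abbrev DualSpace (m n r : ℕ) := EuclideanSpace ℝ (Fin (m + n + r))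

/-- Matrix-vector multiplication regarded as a map between Euclidean spaces. -/
noncomputable def mv {a b : Type*} [Fintype a] [Fintype b]
    (A : Matrix a b ℝ) (x : EuclideanSpace ℝ b) : EuclideanSpace ℝ a :=
  (WithLp.equiv 2 _).symm (A.mulVec ((WithLp.equiv 2 _) x))

/-- The spectral (operator `ℓ²`) norm of a real matrix. -/
noncomputable def specNorm {a b : Type*} [Fintype a] [Fintype b] [DecidableEq b]
    (A : Matrix a b ℝ) : ℝ :=
  ‖LinearMap.toContinuousLinearMap (Matrix.toEuclideanLin A)‖

/-- All data of the inexact primal-dual algorithm for the generalized transport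
problem `min h(x)` over `u = (x,y,z) ∈ Σ` s.t. `Hu = b`, together with the
produced iterates. -/
structure PDSetting (m n r : ℕ) where
  /-- the strong convexity parameter `σ ≥ 0` of `h` -/
  sigma : ℝ
  /-- the vector `φ` in `h(x) = (σ/2)‖x − φ‖² + cᵀx` -/
  phi : EuclideanSpace ℝ (Fin (m * n))
  /-- the cost vector `c` -/
  c : EuclideanSpace ℝ (Fin (m * n))
  /-- the constraint matrix `H` -/
  H : Matrix (Fin (m + n + r)) (PIdx m n) ℝ
  /-- the constraint right-hand side `b` -/
  b : DualSpace m n r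
  /-- the intervals whose product is the box `Σ` -/
  box : PIdx m n → Set ℝ
  /-- the Euclidean projection onto `Σ` -/
  proj : PrimalSpace m n → PrimalSpace m n
  /-- the step sizes `α_k > 0` -/
  alpha : ℕ → ℝ
  /-- the tolerances `ε_k > 0` -/
  eps : ℕ → ℝ
  /-- the primal iterates `u_k` -/
  u : ℕ → PrimalSpace m n
  /-- the auxiliary iterates `v_k` -/
  v : ℕ → PrimalSpace m n
  /-- the dual iterates `λ_k` -/
  lam : ℕ → DualSpace m n r
  /-- `lamS k` is the exact solution `λ_{k+1}^{#}`, the unique zero of `F_k` -/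
  lamS : ℕ → DualSpace m n r
  /-- a primal solution `u* = (x*, y*, z*)` -/
  ustar : PrimalSpace m n
  /-- a dual solution `λ*` -/
  lamstar : DualSpace m n r

/-- The `x`-component of a primal vector `u = (x,y,z)`. -/
noncomputable def xPart {m n : ℕ} (u : PrimalSpace m n) : EuclideanSpace ℝ (Fin (m * n)) :=
  (WithLp.equiv 2 _).symm fun i => u (Sum.inl i)

namespace PDSetting

variable {m n r : ℕ} (S : PDSetting m n r)

/-- `β_k = ∏_{i=0}^{k-1} 1/(1+α_i)`, i.e. `β₀ = 1`, `β_{k+1} = β_k/(1+α_k)`. -/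
noncomputable def beta (k : ℕ) : ℝ := ∏ i ∈ range k, (1 + S.alpha i)⁻¹

/-- `τ_k = β_k (1+α_k)/α_k²`. -/
noncomputable def tau (k : ℕ) : ℝ := S.beta k * (1 + S.alpha k) / (S.alpha k) ^ 2

/-- `η_k = σ + τ_k`. -/
noncomputable def eta (k : ℕ) : ℝ := S.sigma + S.tau k

/-- The diagonal of `D_k = diag(η_k I_{mn}, τ_k Iₙ, τ_k Iₘ)`. -/
noncomputable def dEntry (k : ℕ) : PIdx m n → ℝ :=
  Sum.elim (fun _ => S.eta k) (fun _ => S.tau k)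

/-- The matrix `D_k`. -/
noncomputable def Dmat (k : ℕ) : Matrix (PIdx m n) (PIdx m n) ℝ :=
  Matrix.diagonal (S.dEntry k)

/-- The objective `h(x) = (σ/2)‖x − φ‖² + cᵀx`, as a function of `u`. -/
noncomputable def hObj (u : PrimalSpace m n) : ℝ :=
  S.sigma / 2 * ‖xPart u - S.phi‖ ^ 2 + ⟪S.c, xPart u⟫

/-- The vector `c̃ = (σφ − c, 0ₙ, 0ₘ)`. -/
noncomputable def ctil : PrimalSpace m n :=
  (WithLp.equiv 2 _).symm (Sum.elim (fun i => S.sigma * S.phi i - S.c i) fun _ => 0)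

/-- The box `Σ = 𝒳 × 𝒴 × 𝒵`. -/
def SigmaSet : Set (PrimalSpace m n) := {u | ∀ i, u i ∈ S.box i}

/-- The Lagrangian `𝓛(u, λ) = h(x) + ⟨λ, Hu − b⟩` (for `u ∈ Σ`). -/
noncomputable def Lag (u : PrimalSpace m n) (lam : DualSpace m n r) : ℝ :=
  S.hObj u + ⟪lam, mv S.H u - S.b⟫

/-- `w_k = c̃ + β_k (u_k + α_k v_k)/α_k²`. -/
noncomputable def wk (k : ℕ) : PrimalSpace m n :=
  S.ctil + (S.beta k / (S.alpha k) ^ 2) • (S.u k + S.alpha k • S.v k)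

/-- `λ̃_k = β_{k+1} [λ_k − β_k⁻¹ (Hu_k − b)] − b`. -/
noncomputable def lamTil (k : ℕ) : DualSpace m n r :=
  S.beta (k + 1) • (S.lam k - (S.beta k)⁻¹ • (mv S.H (S.u k) - S.b)) - S.b

/-- `F_k(λ) = β_{k+1} λ − H proj_Σ(D_k⁻¹(w_k − Hᵀλ)) − λ̃_k`. -/
noncomputable def Fk (k : ℕ) (lam : DualSpace m n r) : DualSpace m n r :=
  S.beta (k + 1) • lam -
    mv S.H (S.proj (mv (S.Dmat k)⁻¹ (S.wk k - mv S.Hᵀ lam))) - S.lamTil k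

/-- `u_{k+1}^{#} = proj_Σ(D_k⁻¹(w_k − Hᵀ λ_{k+1}^{#}))`. -/
noncomputable def uS (k : ℕ) : PrimalSpace m n :=
  S.proj (mv (S.Dmat k)⁻¹ (S.wk k - mv S.Hᵀ (S.lamS k)))

/-- `v_{k+1}^{#} = u_{k+1}^{#} + (u_{k+1}^{#} − u_k)/α_k`. -/
noncomputable def vS (k : ℕ) : PrimalSpace m n :=
  S.uS k + (S.alpha k)⁻¹ • (S.uS k - S.u k)

/-- The discrete Lyapunov function
`𝓔(β,u,v,λ) = 𝓛(u,λ*) − 𝓛(u*,λ) + (β/2)(‖v − u*‖² + ‖λ − λ*‖²)`. -/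
noncomputable def Lyap (βv : ℝ) (u v : PrimalSpace m n) (lam : DualSpace m n r) : ℝ :=
  S.Lag u S.lamstar - S.Lag S.ustar lam +
    βv / 2 * (‖v - S.ustar‖ ^ 2 + ‖lam - S.lamstar‖ ^ 2)

/-- `𝓔_k`. -/
noncomputable def E (k : ℕ) : ℝ := S.Lyap (S.beta k) (S.u k) (S.v k) (S.lam k)

/-- `𝓔_{k+1}^{#}`, the Lyapunov function at the exact update of step `k`. -/
noncomputable def ESharp (k : ℕ) : ℝ :=
  S.Lyap (S.beta (k + 1)) (S.uS k) (S.vS k) (S.lamS k)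

/-- `ε̂_k = ∑_{i<k} ε_i α_i² β_i⁻²`. -/
noncomputable def epsHat (k : ℕ) : ℝ :=
  ∑ i ∈ range k, S.eps i * (S.alpha i) ^ 2 / (S.beta i) ^ 2

/-- `ε̃_k = ∑_{i<k} ε_i β_i^{-3/2} (α_i² + α_i √β_i + β_i^{3/2})`. -/
noncomputable def epsTil (k : ℕ) : ℝ :=
  ∑ i ∈ range k, S.eps i / (S.beta i) ^ ((3 : ℝ) / 2) *
    ((S.alpha i) ^ 2 + S.alpha i * Real.sqrt (S.beta i) + (S.beta i) ^ ((3 : ℝ) / 2))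

/-- `Z = ‖H‖(σ‖x*‖ + ‖Hᵀλ* − c̃‖)`. -/
noncomputable def Z : ℝ :=
  specNorm S.H * (S.sigma * ‖xPart S.ustar‖ + ‖mv S.Hᵀ S.lamstar - S.ctil‖)

/-- `Q = 1 + (1 + √σ)‖H‖`. -/
noncomputable def Q : ℝ := 1 + (1 + Real.sqrt S.sigma) * specNorm S.H

/-- All hypotheses of the inexact primal–dual algorithm: the box is a nonempty
closed product of intervals, `proj` is the nearest-point projection onto it,
`(u*, λ*)` is a saddle point, the iterates follow the algorithm with inexactness
`‖λ_{k+1} − λ_{k+1}^{#}‖ ≤ ε_k`, and the exact one-step contraction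
`𝓔_{k+1}^{#} − 𝓔_k ≤ −α_k 𝓔_{k+1}^{#}` holds. -/
structure IsValid : Prop where
  hsigma : 0 ≤ S.sigma
  hbox_ne : ∀ i, (S.box i).Nonempty
  hbox_cl : ∀ i, IsClosed (S.box i)
  hbox_int : ∀ i, (S.box i).OrdConnected
  hproj_mem : ∀ x, S.proj x ∈ S.SigmaSet
  hproj_near : ∀ x, ∀ y ∈ S.SigmaSet, dist x (S.proj x) ≤ dist x y
  halpha : ∀ k, 0 < S.alpha k
  heps : ∀ k, 0 < S.eps k
  hustar : S.ustar ∈ S.SigmaSet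
  hfeas : mv S.H S.ustar = S.b
  hsaddle : ∀ u ∈ S.SigmaSet, S.Lag S.ustar S.lamstar ≤ S.Lag u S.lamstar
  hu0 : S.u 0 ∈ S.SigmaSet
  hlamS : ∀ k, S.Fk k (S.lamS k) = 0
  hlam_err : ∀ k, ‖S.lam (k + 1) - S.lamS k‖ ≤ S.eps k
  hu_upd : ∀ k, S.u (k + 1) = S.proj (mv (S.Dmat k)⁻¹ (S.wk k - mv S.Hᵀ (S.lam (k + 1))))
  hv_upd : ∀ k, S.v (k + 1) = S.u (k + 1) + (S.alpha k)⁻¹ • (S.u (k + 1) - S.u k)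
  hcontract : ∀ k, S.ESharp k - S.E k ≤ -S.alpha k * S.ESharp k

end PDSetting

section Aux

variable {a b : Type*} [Fintype a] [Fintype b]


lemma mv_toEuclideanLin [DecidableEq b] (A : Matrix a b ℝ) (x : EuclideanSpace ℝ b) :
    mv A x = Matrix.toEuclideanLin A x := rfl

lemma mv_sub [DecidableEq b] (A : Matrix a b ℝ) (x y : EuclideanSpace ℝ b) :
    mv A (x - y) = mv A x - mv A y := by
  simp only [mv_toEuclideanLin, map_sub]

lemma specNorm_nonneg [DecidableEq b] (A : Matrix a b ℝ) : 0 ≤ specNorm A :=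
  norm_nonneg _

lemma norm_mv_le [DecidableEq b] (A : Matrix a b ℝ) (x : EuclideanSpace ℝ b) :
    ‖mv A x‖ ≤ specNorm A * ‖x‖ := by
  have := (LinearMap.toContinuousLinearMap (Matrix.toEuclideanLin A)).le_opNorm x
  simpa [mv_toEuclideanLin, specNorm] using this

lemma inner_mv (A : Matrix a b ℝ) (x : EuclideanSpace ℝ a) (y : EuclideanSpace ℝ b) :
    ⟪x, mv A y⟫ = ⟪mv Aᵀ x, y⟫ := by
  have h : (WithLp.equiv 2 _) x ⬝ᵥ (A *ᵥ (WithLp.equiv 2 _) y)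
      = (Aᵀ *ᵥ (WithLp.equiv 2 _) x) ⬝ᵥ (WithLp.equiv 2 _) y := by
    rw [Matrix.dotProduct_mulVec, Matrix.mulVec_transpose]
  simpa [mv, PiLp.inner_apply, RCLike.inner_apply, starRingEnd_apply, dotProduct, mul_comm] using h

lemma norm_mvT_le [DecidableEq a] [DecidableEq b] (A : Matrix a b ℝ) (x : EuclideanSpace ℝ a) :
    ‖mv Aᵀ x‖ ≤ specNorm A * ‖x‖ := by
  set y := mv Aᵀ x with hy
  rcases eq_or_lt_of_le (norm_nonneg y) with h | h
  · rw [← h]; exact mul_nonneg (specNorm_nonneg A) (norm_nonneg x)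
  · have h1 : ‖y‖ * ‖y‖ = ⟪x, mv A y⟫ := by
      rw [inner_mv, ← hy]
      exact (real_inner_self_eq_norm_mul_norm y).symm
    have h2 : ⟪x, mv A y⟫ ≤ ‖x‖ * ‖mv A y‖ := real_inner_le_norm _ _
    have h3 : ‖mv A y‖ ≤ specNorm A * ‖y‖ := norm_mv_le A y
    nlinarith [norm_nonneg x, specNorm_nonneg A]

lemma euclid_norm_le_of_abs_le {ι : Type*} [Fintype ι] (x y : EuclideanSpace ℝ ι)
    (h : ∀ i, |x i| ≤ |y i|) : ‖x‖ ≤ ‖y‖ := by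
  rw [EuclideanSpace.norm_eq, EuclideanSpace.norm_eq]
  apply Real.sqrt_le_sqrt
  apply Finset.sum_le_sum
  intro i _
  simp only [Real.norm_eq_abs]
  exact pow_le_pow_left₀ (abs_nonneg _) (h i) 2


lemma varineq_gen {E : Type*} [NormedAddCommGroup E] [InnerProductSpace ℝ E]
    (K : Set E) (hK : Convex ℝ K) (x p : E) (hp : p ∈ K)
    (hnear : ∀ y ∈ K, ‖x - p‖ ≤ ‖x - y‖) :
    ∀ w ∈ K, ⟪x - p, w - p⟫ ≤ 0 := by
  haveI : Nonempty K := ⟨⟨_, hp⟩⟩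
  have hinf : ‖x - p‖ = ⨅ w : K, ‖x - (w : E)‖ := by
    refine le_antisymm (le_ciInf fun w => hnear w w.2) (ciInf_le (⟨0, ?_⟩ : BddBelow (Set.range fun w : K => ‖x - (w : E)‖)) ⟨_, hp⟩)
    rintro c ⟨w, rfl⟩; exact norm_nonneg _
  exact (norm_eq_iInf_iff_real_inner_le_zero hK hp).mp hinf

end Aux


namespace PDSetting

variable {m n r : ℕ} (S : PDSetting m n r)

lemma sigmaSet_convex (hS : S.IsValid) : Convex ℝ S.SigmaSet := by
  intro u hu w hw p q hp hq hpq i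
  have hconv : Convex ℝ (S.box i) := convex_iff_ordConnected.mpr (hS.hbox_int i)
  have := hconv (hu i) (hw i) hp hq hpq
  simpa [smul_eq_mul] using this

lemma proj_varineq (hS : S.IsValid) (x : PrimalSpace m n) :
    ∀ w ∈ S.SigmaSet, ⟪x - S.proj x, w - S.proj x⟫ ≤ 0 :=
  varineq_gen S.SigmaSet (S.sigmaSet_convex hS) x (S.proj x) (hS.hproj_mem x)
    (fun y hy => by simpa [dist_eq_norm] using hS.hproj_near x y hy)

lemma proj_nonexp (hS : S.IsValid) (x y : PrimalSpace m n) :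
    ‖S.proj x - S.proj y‖ ≤ ‖x - y‖ := by
  set p := S.proj x
  set q := S.proj y
  have h1 : ⟪x - p, q - p⟫ ≤ 0 := S.proj_varineq hS x q (hS.hproj_mem y)
  have h2 : ⟪y - q, p - q⟫ ≤ 0 := S.proj_varineq hS y p (hS.hproj_mem x)
  have e1 : ⟪y - q, p - q⟫ = -⟪y - q, q - p⟫ := by
    rw [← inner_neg_right]; congr 1; abel
  have e2 : ⟪x - p, q - p⟫ - ⟪y - q, q - p⟫ = ⟪(x - y) - (p - q), q - p⟫ := by
    rw [← inner_sub_left]; congr 1; abel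
  have e3 : ⟪(x - y) - (p - q), q - p⟫ = ⟪x - y, q - p⟫ - ⟪p - q, q - p⟫ := inner_sub_left _ _ _
  have e4 : ⟪x - y, q - p⟫ = -⟪x - y, p - q⟫ := by
    rw [← inner_neg_right]; congr 1; abel
  have e5 : ⟪p - q, q - p⟫ = -(‖p - q‖ * ‖p - q‖) := by
    rw [show q - p = -(p - q) by abel, inner_neg_right, real_inner_self_eq_norm_mul_norm]
  have key : ‖p - q‖ * ‖p - q‖ ≤ ⟪x - y, p - q⟫ := by linarith
  have cs : ⟪x - y, p - q⟫ ≤ ‖x - y‖ * ‖p - q‖ := real_inner_le_norm _ _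
  rcases eq_or_lt_of_le (norm_nonneg (p - q)) with h | h
  · rw [← h]; exact norm_nonneg _
  · nlinarith

lemma beta_pos (hS : S.IsValid) (k : ℕ) : 0 < S.beta k :=
  Finset.prod_pos fun i _ => inv_pos.mpr (by linarith [hS.halpha i])

lemma beta_succ (k : ℕ) : S.beta (k + 1) = S.beta k * (1 + S.alpha k)⁻¹ :=
  Finset.prod_range_succ _ _

lemma tau_pos (hS : S.IsValid) (k : ℕ) : 0 < S.tau k :=
  div_pos (mul_pos (S.beta_pos hS k) (by linarith [hS.halpha k])) (pow_pos (hS.halpha k) 2)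

lemma dEntry_pos (hS : S.IsValid) (k : ℕ) (i : PIdx m n) : 0 < S.dEntry k i := by
  have h1 := S.tau_pos hS k
  have h2 := hS.hsigma
  rcases i with i | i
  · simp only [dEntry, Sum.elim_inl, eta]; linarith
  · simp only [dEntry, Sum.elim_inr]; exact h1

lemma tau_le_dEntry (hS : S.IsValid) (k : ℕ) (i : PIdx m n) : S.tau k ≤ S.dEntry k i := by
  have h2 := hS.hsigma
  rcases i with i | i
  · simp only [dEntry, Sum.elim_inl, eta]; linarith
  · simp only [dEntry, Sum.elim_inr]; exact le_refl _

lemma Dmat_inv (hS : S.IsValid) (k : ℕ) :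
    (S.Dmat k)⁻¹ = Matrix.diagonal (fun i => (S.dEntry k i)⁻¹) := by
  apply Matrix.inv_eq_right_inv
  have h1 : ∀ i, S.dEntry k i * (S.dEntry k i)⁻¹ = 1 := fun i =>
    mul_inv_cancel₀ (ne_of_gt (S.dEntry_pos hS k i))
  rw [Dmat, Matrix.diagonal_mul_diagonal]
  simp only [h1, Matrix.diagonal_one]

lemma norm_mv_Dinv_le (hS : S.IsValid) (k : ℕ) (w : PrimalSpace m n) :
    ‖mv (S.Dmat k)⁻¹ w‖ ≤ (S.tau k)⁻¹ * ‖w‖ := by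
  have htau := S.tau_pos hS k
  have hb : ‖mv (S.Dmat k)⁻¹ w‖ ≤ ‖(S.tau k)⁻¹ • w‖ := by
    apply euclid_norm_le_of_abs_le
    intro i
    have happ : (mv (S.Dmat k)⁻¹ w) i = (S.dEntry k i)⁻¹ * w i := by
      rw [S.Dmat_inv hS]
      simp [mv, Matrix.mulVec_diagonal]
    have happ2 : ((S.tau k)⁻¹ • w : PrimalSpace m n) i = (S.tau k)⁻¹ * w i := rfl
    rw [happ, happ2, abs_mul, abs_mul]
    apply mul_le_mul_of_nonneg_right _ (abs_nonneg _)
    rw [abs_of_pos (inv_pos.mpr (S.dEntry_pos hS k i)), abs_of_pos (inv_pos.mpr htau)]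
    exact inv_anti₀ htau (S.tau_le_dEntry hS k i)
  calc ‖mv (S.Dmat k)⁻¹ w‖ ≤ ‖(S.tau k)⁻¹ • w‖ := hb
    _ = (S.tau k)⁻¹ * ‖w‖ := by
        rw [norm_smul, Real.norm_eq_abs, abs_of_pos (inv_pos.mpr htau)]

lemma inner_ctil (w : PrimalSpace m n) :
    ⟪S.ctil, w⟫ = S.sigma * ⟪S.phi, xPart w⟫ - ⟪S.c, xPart w⟫ := by
  simp only [ctil, xPart, PiLp.inner_apply, RCLike.inner_apply, starRingEnd_apply,
    star_trivial, WithLp.equiv_symm_apply, PiLp.toLp_apply, Fintype.sum_sum_type, Sum.elim_inl,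
    Sum.elim_inr, zero_mul, mul_zero, Finset.sum_const_zero, add_zero, Finset.mul_sum,
    ← Finset.sum_sub_distrib]
  congr 1
  funext i
  ring

end PDSetting

section XPart

variable {m n : ℕ}

lemma xPart_sub (u v : PrimalSpace m n) : xPart (u - v) = xPart u - xPart v := by
  ext i
  simp [xPart]

lemma norm_xPart_le (u : PrimalSpace m n) : ‖xPart u‖ ≤ ‖u‖ := by
  rw [EuclideanSpace.norm_eq, EuclideanSpace.norm_eq]
  apply Real.sqrt_le_sqrt
  rw [Fintype.sum_sum_type]
  have h1 : ∑ i : Fin (m * n), ‖xPart u i‖ ^ 2 = ∑ i : Fin (m * n), ‖u (Sum.inl i)‖ ^ 2 := by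
    apply Finset.sum_congr rfl
    intro i _
    rfl
  rw [h1]
  have h2 : (0 : ℝ) ≤ ∑ i : Fin n ⊕ Fin m, ‖u (Sum.inr i)‖ ^ 2 :=
    Finset.sum_nonneg fun i _ => sq_nonneg _
  linarith

end XPart


set_option maxHeartbeats 1600000 in
/-- one-iteration estimate, Lemma 3.2. -/
theorem stmt2 {m n r : ℕ} (S : PDSetting m n r) (hS : S.IsValid) (k : ℕ) :
    S.E (k + 1) ≤ S.E k / (1 + S.alpha k)
      + S.eps k * (S.beta k)⁻¹ * (S.alpha k) ^ 2 * specNorm S.H *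
          (S.sigma * ‖xPart S.ustar‖ + ‖mv S.Hᵀ S.lamstar - S.ctil‖)
      + S.eps k * (S.beta k)⁻¹ *
          (S.sigma * (S.alpha k) ^ 2 * specNorm S.H *
              ‖xPart (S.u (k + 1)) - xPart S.ustar‖
            + S.alpha k * S.beta k * specNorm S.H * ‖S.v (k + 1) - S.ustar‖
            + (S.beta k) ^ 2 * ‖S.lam (k + 1) - S.lamstar‖) := by
  have hα : 0 < S.alpha k := hS.halpha k
  have hβ : 0 < S.beta k := S.beta_pos hS k
  have hε : 0 < S.eps k := hS.heps k
  have hτ : 0 < S.tau k := S.tau_pos hS k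
  have hσ : 0 ≤ S.sigma := hS.hsigma
  have hN0 : 0 ≤ specNorm S.H := specNorm_nonneg _
  set α := S.alpha k with hαdef
  set β := S.beta k with hβdef
  set ε := S.eps k with hεdef
  set N := specNorm S.H with hNdef
  set u1 := S.u (k + 1) with hu1def
  set u2 := S.uS k with hu2def
  set l1 := S.lam (k + 1) with hl1def
  set l2 := S.lamS k with hl2def
  set v1 := S.v (k + 1) with hv1def
  set v2 := S.vS k with hv2def
  set βp := S.beta (k + 1) with hβpdef
  set X1 := ‖xPart u1 - xPart S.ustar‖ with hX1def
  set XS := ‖xPart S.ustar‖ with hXSdef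
  set C := ‖mv S.Hᵀ S.lamstar - S.ctil‖ with hCdef
  set V1 := ‖v1 - S.ustar‖ with hV1def
  set L1 := ‖l1 - S.lamstar‖ with hL1def
  have h1α : (0 : ℝ) < 1 + α := by linarith
  have hβp : βp = β * (1 + α)⁻¹ := S.beta_succ k
  have hβp0 : 0 < βp := by
    rw [hβp]; exact mul_pos hβ (inv_pos.mpr h1α)
  have hτeq : S.tau k = β * (1 + α) / α ^ 2 := rfl
  have hτeq2 : (S.tau k)⁻¹ = α ^ 2 * (β * (1 + α))⁻¹ := by
    rw [hτeq, inv_div, div_eq_mul_inv]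
  have h5 : (1 + α)⁻¹ ≤ 1 := by
    simpa using inv_anti₀ one_pos (by linarith : (1 : ℝ) ≤ 1 + α)
  -- distance between exact and inexact primal updates
  have hdu : ‖u1 - u2‖ ≤ (S.tau k)⁻¹ * (N * ε) := by
    have e1 : u1 = S.proj (mv (S.Dmat k)⁻¹ (S.wk k - mv S.Hᵀ l1)) := hS.hu_upd k
    have e2 : u2 = S.proj (mv (S.Dmat k)⁻¹ (S.wk k - mv S.Hᵀ l2)) := rfl
    have e3 : mv (S.Dmat k)⁻¹ (S.wk k - mv S.Hᵀ l1) - mv (S.Dmat k)⁻¹ (S.wk k - mv S.Hᵀ l2)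
        = mv (S.Dmat k)⁻¹ (mv S.Hᵀ (l2 - l1)) := by
      rw [← mv_sub, mv_sub S.Hᵀ l2 l1]
      congr 1
      abel
    have hl : ‖l2 - l1‖ ≤ ε := by
      rw [norm_sub_rev]; exact hS.hlam_err k
    calc ‖u1 - u2‖
        ≤ ‖mv (S.Dmat k)⁻¹ (S.wk k - mv S.Hᵀ l1) - mv (S.Dmat k)⁻¹ (S.wk k - mv S.Hᵀ l2)‖ := by
          rw [e1, e2]; exact S.proj_nonexp hS _ _
      _ = ‖mv (S.Dmat k)⁻¹ (mv S.Hᵀ (l2 - l1))‖ := by rw [e3]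
      _ ≤ (S.tau k)⁻¹ * ‖mv S.Hᵀ (l2 - l1)‖ := S.norm_mv_Dinv_le hS k _
      _ ≤ (S.tau k)⁻¹ * (N * ‖l2 - l1‖) :=
          mul_le_mul_of_nonneg_left (norm_mvT_le _ _) (inv_nonneg.mpr hτ.le)
      _ ≤ (S.tau k)⁻¹ * (N * ε) := by
          exact mul_le_mul_of_nonneg_left (mul_le_mul_of_nonneg_left hl hN0)
            (inv_nonneg.mpr hτ.le)
  have hdub : ‖u1 - u2‖ ≤ ε * β⁻¹ * α ^ 2 * N := by
    have hnn : (0 : ℝ) ≤ ε * β⁻¹ * α ^ 2 * N :=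
      mul_nonneg (mul_nonneg (mul_nonneg hε.le (inv_nonneg.mpr hβ.le)) (sq_nonneg α)) hN0
    calc ‖u1 - u2‖ ≤ (S.tau k)⁻¹ * (N * ε) := hdu
      _ = ε * β⁻¹ * α ^ 2 * N * (1 + α)⁻¹ := by rw [hτeq2, mul_inv]; ring
      _ ≤ ε * β⁻¹ * α ^ 2 * N * 1 := mul_le_mul_of_nonneg_left h5 hnn
      _ = ε * β⁻¹ * α ^ 2 * N := mul_one _
  -- Lagrangian difference bound
  have hLagd : S.Lag u1 S.lamstar - S.Lag u2 S.lamstar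
      ≤ (S.sigma * X1 + (S.sigma * XS + C)) * ‖u1 - u2‖ := by
    set dx := xPart u1 - xPart u2 with hdxdef
    have hdxd : dx = xPart (u1 - u2) := (xPart_sub u1 u2).symm
    have hdxn : ‖dx‖ ≤ ‖u1 - u2‖ := by rw [hdxd]; exact norm_xPart_le _
    have hid := norm_sub_sq_real (xPart u1 - S.phi) dx
    rw [show xPart u1 - S.phi - dx = xPart u2 - S.phi by rw [hdxdef]; abel] at hid
    have hid2 : S.sigma / 2 * ‖xPart u2 - S.phi‖ ^ 2
        = S.sigma / 2 * ‖xPart u1 - S.phi‖ ^ 2 - S.sigma * ⟪xPart u1 - S.phi, dx⟫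
          + S.sigma / 2 * ‖dx‖ ^ 2 := by linear_combination (S.sigma / 2) * hid
    have hcdiff : ⟪S.c, dx⟫ = ⟪S.c, xPart u1⟫ - ⟪S.c, xPart u2⟫ := inner_sub_right _ _ _
    have hlin : ⟪S.lamstar, mv S.H u1 - S.b⟫ - ⟪S.lamstar, mv S.H u2 - S.b⟫
        = ⟪mv S.Hᵀ S.lamstar, u1 - u2⟫ := by
      rw [← inner_sub_right,
        show mv S.H u1 - S.b - (mv S.H u2 - S.b) = mv S.H (u1 - u2) by rw [mv_sub]; abel,
        inner_mv]
    have ea : ⟪xPart u1 - S.phi, dx⟫ = ⟪xPart u1, dx⟫ - ⟪S.phi, dx⟫ := inner_sub_left _ _ _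
    have ea2 : S.sigma * ⟪xPart u1 - S.phi, dx⟫
        = S.sigma * ⟪xPart u1, dx⟫ - S.sigma * ⟪S.phi, dx⟫ := by
      linear_combination S.sigma * ea
    have eb : ⟪xPart u1 - xPart S.ustar, dx⟫ = ⟪xPart u1, dx⟫ - ⟪xPart S.ustar, dx⟫ :=
      inner_sub_left _ _ _
    have eb2 : S.sigma * ⟪xPart u1 - xPart S.ustar, dx⟫
        = S.sigma * ⟪xPart u1, dx⟫ - S.sigma * ⟪xPart S.ustar, dx⟫ := by
      linear_combination S.sigma * eb
    have ec : ⟪mv S.Hᵀ S.lamstar - S.ctil, u1 - u2⟫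
        = ⟪mv S.Hᵀ S.lamstar, u1 - u2⟫ - ⟪S.ctil, u1 - u2⟫ := inner_sub_left _ _ _
    have ed : ⟪S.ctil, u1 - u2⟫ = S.sigma * ⟪S.phi, xPart (u1 - u2)⟫ - ⟪S.c, xPart (u1 - u2)⟫ :=
      S.inner_ctil _
    rw [← hdxd] at ed
    have cs1 : ⟪xPart u1 - xPart S.ustar, dx⟫ ≤ X1 * ‖dx‖ := real_inner_le_norm _ _
    have cs2 : ⟪xPart S.ustar, dx⟫ ≤ XS * ‖dx‖ := real_inner_le_norm _ _
    have cs3 : ⟪mv S.Hᵀ S.lamstar - S.ctil, u1 - u2⟫ ≤ C * ‖u1 - u2‖ := real_inner_le_norm _ _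
    have hobj1 : S.Lag u1 S.lamstar
        = S.sigma / 2 * ‖xPart u1 - S.phi‖ ^ 2 + ⟪S.c, xPart u1⟫
          + ⟪S.lamstar, mv S.H u1 - S.b⟫ := rfl
    have hobj2 : S.Lag u2 S.lamstar
        = S.sigma / 2 * ‖xPart u2 - S.phi‖ ^ 2 + ⟪S.c, xPart u2⟫
          + ⟪S.lamstar, mv S.H u2 - S.b⟫ := rfl
    have m1 : S.sigma * ⟪xPart u1 - xPart S.ustar, dx⟫ ≤ S.sigma * (X1 * ‖dx‖) :=
      mul_le_mul_of_nonneg_left cs1 hσ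
    have m2 : S.sigma * ⟪xPart S.ustar, dx⟫ ≤ S.sigma * (XS * ‖dx‖) :=
      mul_le_mul_of_nonneg_left cs2 hσ
    have m3 : S.sigma * (X1 * ‖dx‖) ≤ S.sigma * (X1 * ‖u1 - u2‖) :=
      mul_le_mul_of_nonneg_left (mul_le_mul_of_nonneg_left hdxn (norm_nonneg _)) hσ
    have m4 : S.sigma * (XS * ‖dx‖) ≤ S.sigma * (XS * ‖u1 - u2‖) :=
      mul_le_mul_of_nonneg_left (mul_le_mul_of_nonneg_left hdxn (norm_nonneg _)) hσ
    have hsq : 0 ≤ S.sigma * ‖dx‖ ^ 2 := mul_nonneg hσ (sq_nonneg _)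
    rw [hobj1, hobj2]
    linarith [hid2, hcdiff, hlin, ea2, eb2, ec, ed, m1, m2, m3, m4, hsq, cs3]
  -- dual feasibility kills the second Lagrangian difference
  have hT2 : S.Lag S.ustar l2 = S.Lag S.ustar l1 := by
    have hfeas0 : mv S.H S.ustar - S.b = 0 := by rw [hS.hfeas]; exact sub_self _
    simp only [PDSetting.Lag, hfeas0, inner_zero_right]
  -- v-difference
  have hv12 : v1 - v2 = (1 + α⁻¹) • (u1 - u2) := by
    have e1 : v1 = u1 + α⁻¹ • (u1 - S.u k) := hS.hv_upd k
    have e2 : v2 = u2 + α⁻¹ • (u2 - S.u k) := rfl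
    rw [e1, e2]
    module
  have hv12n : ‖v1 - v2‖ = (1 + α⁻¹) * ‖u1 - u2‖ := by
    rw [hv12, norm_smul, Real.norm_eq_abs, abs_of_pos]
    have := inv_pos.mpr hα
    linarith
  -- quadratic-difference bounds
  have hT3 : βp / 2 * (‖v1 - S.ustar‖ ^ 2 - ‖v2 - S.ustar‖ ^ 2)
      ≤ βp * (‖v1 - v2‖ * V1) := by
    have hid := norm_sub_sq_real (v1 - S.ustar) (v1 - v2)
    rw [show v1 - S.ustar - (v1 - v2) = v2 - S.ustar by abel] at hid
    have cs : ⟪v1 - S.ustar, v1 - v2⟫ ≤ V1 * ‖v1 - v2‖ := real_inner_le_norm _ _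
    have hid2 : βp / 2 * (‖v1 - S.ustar‖ ^ 2 - ‖v2 - S.ustar‖ ^ 2)
        = βp * ⟪v1 - S.ustar, v1 - v2⟫ - βp / 2 * ‖v1 - v2‖ ^ 2 := by
      linear_combination (-(βp / 2)) * hid
    have cs' : βp * ⟪v1 - S.ustar, v1 - v2⟫ ≤ βp * (V1 * ‖v1 - v2‖) :=
      mul_le_mul_of_nonneg_left cs hβp0.le
    have hnn : 0 ≤ βp / 2 * ‖v1 - v2‖ ^ 2 := by positivity
    have : βp * (V1 * ‖v1 - v2‖) = βp * (‖v1 - v2‖ * V1) := by ring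
    linarith [cs', hid2, hnn]
  have hT4 : βp / 2 * (‖l1 - S.lamstar‖ ^ 2 - ‖l2 - S.lamstar‖ ^ 2)
      ≤ βp * (ε * L1) := by
    have hid := norm_sub_sq_real (l1 - S.lamstar) (l1 - l2)
    rw [show l1 - S.lamstar - (l1 - l2) = l2 - S.lamstar by abel] at hid
    have cs : ⟪l1 - S.lamstar, l1 - l2⟫ ≤ L1 * ‖l1 - l2‖ := real_inner_le_norm _ _
    have hl : ‖l1 - l2‖ ≤ ε := hS.hlam_err k
    have cs2 : ⟪l1 - S.lamstar, l1 - l2⟫ ≤ L1 * ε := by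
      calc ⟪l1 - S.lamstar, l1 - l2⟫ ≤ L1 * ‖l1 - l2‖ := cs
        _ ≤ L1 * ε := mul_le_mul_of_nonneg_left hl (norm_nonneg _)
    have hid2 : βp / 2 * (‖l1 - S.lamstar‖ ^ 2 - ‖l2 - S.lamstar‖ ^ 2)
        = βp * ⟪l1 - S.lamstar, l1 - l2⟫ - βp / 2 * ‖l1 - l2‖ ^ 2 := by
      linear_combination (-(βp / 2)) * hid
    have cs' : βp * ⟪l1 - S.lamstar, l1 - l2⟫ ≤ βp * (L1 * ε) :=
      mul_le_mul_of_nonneg_left cs2 hβp0.le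
    have hnn : 0 ≤ βp / 2 * ‖l1 - l2‖ ^ 2 := by positivity
    have hre : βp * (L1 * ε) = βp * (ε * L1) := by ring
    linarith [cs', hid2, hnn]
  -- exact contraction
  have hsharp : S.ESharp k ≤ S.E k / (1 + α) := by
    have h := hS.hcontract k
    rw [le_div_iff₀ h1α]
    nlinarith [h]  -- linear after normalization
  -- decomposition
  have hdecomp : S.E (k + 1) = S.ESharp k
      + (S.Lag u1 S.lamstar - S.Lag u2 S.lamstar)
      + (S.Lag S.ustar l2 - S.Lag S.ustar l1)
      + βp / 2 * (‖v1 - S.ustar‖ ^ 2 - ‖v2 - S.ustar‖ ^ 2)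
      + βp / 2 * (‖l1 - S.lamstar‖ ^ 2 - ‖l2 - S.lamstar‖ ^ 2) := by
    have e1 : S.E (k + 1) = S.Lag u1 S.lamstar - S.Lag S.ustar l1
        + βp / 2 * (‖v1 - S.ustar‖ ^ 2 + ‖l1 - S.lamstar‖ ^ 2) := rfl
    have e2 : S.ESharp k = S.Lag u2 S.lamstar - S.Lag S.ustar l2
        + βp / 2 * (‖v2 - S.ustar‖ ^ 2 + ‖l2 - S.lamstar‖ ^ 2) := rfl
    rw [e1, e2]; ring
  -- final error-term bounds
  have b1 : (S.sigma * X1 + (S.sigma * XS + C)) * ‖u1 - u2‖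
      ≤ ε * β⁻¹ * α ^ 2 * N * (S.sigma * XS + C) + ε * β⁻¹ * (S.sigma * α ^ 2 * N * X1) := by
    have hX1n : (0 : ℝ) ≤ X1 := norm_nonneg _
    have hXSn : (0 : ℝ) ≤ XS := norm_nonneg _
    have hCn : (0 : ℝ) ≤ C := norm_nonneg _
    have p1 : S.sigma * X1 * ‖u1 - u2‖ ≤ S.sigma * X1 * (ε * β⁻¹ * α ^ 2 * N) :=
      mul_le_mul_of_nonneg_left hdub (mul_nonneg hσ hX1n)
    have p2 : (S.sigma * XS + C) * ‖u1 - u2‖ ≤ (S.sigma * XS + C) * (ε * β⁻¹ * α ^ 2 * N) :=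
      mul_le_mul_of_nonneg_left hdub (by positivity)
    linarith [p1, p2]
  have b2 : βp * (‖v1 - v2‖ * V1) ≤ ε * β⁻¹ * (α * β * N * V1) := by
    rw [hv12n]
    have key : βp * ((1 + α⁻¹) * ‖u1 - u2‖) ≤ ε * α * N := by
      have h6 : (0 : ℝ) < 1 + α⁻¹ := by
        have := inv_pos.mpr hα; linarith
      calc βp * ((1 + α⁻¹) * ‖u1 - u2‖)
          ≤ βp * ((1 + α⁻¹) * ((S.tau k)⁻¹ * (N * ε))) :=
            mul_le_mul_of_nonneg_left (mul_le_mul_of_nonneg_left hdu h6.le) hβp0.le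
        _ = α / (1 + α) * (N * ε) := by
            rw [hβp, hτeq2]
            field_simp
            ring
        _ ≤ α * (N * ε) :=
            mul_le_mul_of_nonneg_right (div_le_self hα.le (by linarith))
              (mul_nonneg hN0 hε.le)
        _ = ε * α * N := by ring
    calc βp * ((1 + α⁻¹) * ‖u1 - u2‖ * V1)
        = βp * ((1 + α⁻¹) * ‖u1 - u2‖) * V1 := by ring
      _ ≤ ε * α * N * V1 := mul_le_mul_of_nonneg_right key (norm_nonneg _)
      _ = ε * β⁻¹ * (α * β * N * V1) := by
          field_simp
  have b3 : βp * (ε * L1) ≤ ε * β⁻¹ * (β ^ 2 * L1) := by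
    have hβple : βp ≤ β := by
      rw [hβp]
      calc β * (1 + α)⁻¹ ≤ β * 1 := mul_le_mul_of_nonneg_left h5 hβ.le
        _ = β := mul_one _
    calc βp * (ε * L1) ≤ β * (ε * L1) :=
          mul_le_mul_of_nonneg_right hβple (mul_nonneg hε.le (norm_nonneg _))
      _ = ε * β⁻¹ * (β ^ 2 * L1) := by field_simp
  have hLag' := le_trans hLagd b1
  have hT3' := le_trans hT3 b2
  have hT4' := le_trans hT4 b3
  linarith [hdecomp, hT2, hLag', hT3', hT4', hsharp]
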